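/- Let γ̄_b, γ̄_e > 0, Δ_b ∈ [0, 1), Δ_e ∈ [0, 1], and R_s > 0. Then γ̄_b (1 − Δ_b) > 2^{R_s} γ̄_e (1 + Δ_e) + 2^{R_s} − 1 if and only if R_s < log₂((γ̄_b(1 − Δ_b) + 1)/(γ̄_e(1 + Δ_e) + 1)). Consequently, for two-wave Bob and Eve channels with independent uniform phases, every constant rate R_s with 0 < R_s < R_s^max = [log₂((γ̄_b(1 − Δ_b) + 1)/(γ̄_e(1 + Δ_e) + 1))]⁺ yields zero outage probability of secrecy capacity: P([log₂(1+γ_b) − log₂(1+γ_e)]⁺ < R_s) = 0. -/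

import Mathlib

open MeasureTheory ProbabilityTheory Real Complex

/-- The uniform distribution on `[0, 2π)`. -/
noncomputable def uniformPhase : Measure ℝ :=
  (ENNReal.ofReal (2 * Real.pi))⁻¹ • (volume.restrict (Set.Ico 0 (2 * Real.pi)))

/-- For `γ̄_b, γ̄_e > 0`, `Δ_b ∈ [0,1)`, `Δ_e ∈ [0,1]`, `R_s > 0`:
`γ̄_b(1−Δ_b) > 2^{R_s} γ̄_e (1+Δ_e) + 2^{R_s} − 1` iff
`R_s < log₂((γ̄_b(1−Δ_b)+1)/(γ̄_e(1+Δ_e)+1))`.  Consequently, for two-wave Bob and Eve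
channels with independent uniform phases, every rate `0 < R_s < R_s^max` (where
`R_s^max = [log₂((γ̄_b(1−Δ_b)+1)/(γ̄_e(1+Δ_e)+1))]⁺`) gives zero outage probability of
secrecy capacity. -/
theorem twoWave_max_secrecy_rate {Ω : Type*} [MeasurableSpace Ω] (μ : Measure Ω)
    [IsProbabilityMeasure μ]
    (Vb₁ Vb₂ Ve₁ Ve₂ : ℝ) (hVb₁ : 0 < Vb₁) (hVb₂ : 0 < Vb₂)
    (hVe₁ : 0 < Ve₁) (hVe₂ : 0 < Ve₂)
    (φ : Fin 4 → Ω → ℝ) (hφ : ∀ i, Measurable (φ i))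
    (hindep : iIndepFun φ μ)
    (hunif : ∀ i, Measure.map (φ i) μ = uniformPhase)
    (γbar_b γbar_e : ℝ) (hγbar_b : 0 < γbar_b) (hγbar_e : 0 < γbar_e)
    (γb γe : Ω → ℝ)
    (hγb_def : ∀ ω, γb ω = γbar_b *
      ‖(Vb₁ : ℂ) * Complex.exp ((φ 0 ω : ℂ) * Complex.I) +
        (Vb₂ : ℂ) * Complex.exp ((φ 1 ω : ℂ) * Complex.I)‖ ^ 2 / (Vb₁ ^ 2 + Vb₂ ^ 2))
    (hγe_def : ∀ ω, γe ω = γbar_e *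
      ‖(Ve₁ : ℂ) * Complex.exp ((φ 2 ω : ℂ) * Complex.I) +
        (Ve₂ : ℂ) * Complex.exp ((φ 3 ω : ℂ) * Complex.I)‖ ^ 2 / (Ve₁ ^ 2 + Ve₂ ^ 2))
    (Δb Δe : ℝ)
    (hΔb : Δb = 2 * Vb₁ * Vb₂ / (Vb₁ ^ 2 + Vb₂ ^ 2))
    (hΔe : Δe = 2 * Ve₁ * Ve₂ / (Ve₁ ^ 2 + Ve₂ ^ 2)) :
    (∀ gb ge Db De Rs : ℝ, 0 < gb → 0 < ge → 0 ≤ Db → Db < 1 → 0 ≤ De → De ≤ 1 →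
      0 < Rs →
      (gb * (1 - Db) > 2 ^ Rs * ge * (1 + De) + 2 ^ Rs - 1 ↔
        Rs < Real.logb 2 ((gb * (1 - Db) + 1) / (ge * (1 + De) + 1)))) ∧
    (∀ Rs : ℝ, 0 < Rs →
      Rs < max 0 (Real.logb 2
        ((γbar_b * (1 - Δb) + 1) / (γbar_e * (1 + Δe) + 1))) →
      μ {ω | max 0 (Real.logb 2 (1 + γb ω) - Real.logb 2 (1 + γe ω)) < Rs} = 0) := by
  have one_lt_two : (1:ℝ) < 2 := one_lt_two
  constructor
  · intro gb ge Db De Rs hgb hge hDb0 hDb1 hDe0 hDe1 hRs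
    have hA : 0 < gb * (1 - Db) := mul_pos hgb (by linarith)
    have hden : 0 < ge * (1 + De) + 1 := by nlinarith
    have hnum : 0 < gb * (1 - Db) + 1 := by linarith
    rw [Real.lt_logb_iff_rpow_lt one_lt_two (div_pos hnum hden), lt_div_iff₀ hden]
    have hp : (0:ℝ) < (2:ℝ) ^ Rs := Real.rpow_pos_of_pos (by norm_num) Rs
    constructor <;> intro h <;> nlinarith
  · intro Rs hRs hRsmax
    have hSb : 0 < Vb₁ ^ 2 + Vb₂ ^ 2 := by positivity
    have hSe : 0 < Ve₁ ^ 2 + Ve₂ ^ 2 := by positivity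
    -- generic amplitude bounds
    have habs : ∀ (V₁ V₂ θ₁ θ₂ : ℝ), 0 < V₁ → 0 < V₂ →
        (V₁ - V₂) ^ 2 ≤ ‖(V₁ : ℂ) * Complex.exp ((θ₁ : ℂ) * Complex.I) +
          (V₂ : ℂ) * Complex.exp ((θ₂ : ℂ) * Complex.I)‖ ^ 2 ∧
        ‖(V₁ : ℂ) * Complex.exp ((θ₁ : ℂ) * Complex.I) +
          (V₂ : ℂ) * Complex.exp ((θ₂ : ℂ) * Complex.I)‖ ^ 2 ≤ (V₁ + V₂) ^ 2 := by
      intro V₁ V₂ θ₁ θ₂ hV₁ hV₂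
      set a : ℂ := (V₁ : ℂ) * Complex.exp ((θ₁ : ℂ) * Complex.I) with ha_def
      set b : ℂ := (V₂ : ℂ) * Complex.exp ((θ₂ : ℂ) * Complex.I) with hb_def
      have ha : ‖a‖ = V₁ := by
        rw [ha_def, norm_mul, Complex.norm_exp_ofReal_mul_I, Complex.norm_real, Real.norm_eq_abs,
          abs_of_pos hV₁, mul_one]
      have hb : ‖b‖ = V₂ := by
        rw [hb_def, norm_mul, Complex.norm_exp_ofReal_mul_I, Complex.norm_real, Real.norm_eq_abs,
          abs_of_pos hV₂, mul_one]
      have htri : ‖a + b‖ ≤ V₁ + V₂ := by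
        calc ‖a + b‖ ≤ ‖a‖ + ‖b‖ := norm_add_le a b
        _ = V₁ + V₂ := by rw [ha, hb]
      have h1 : V₁ - V₂ ≤ ‖a + b‖ := by
        have := norm_sub_norm_le a (-b)
        simp only [sub_neg_eq_add, norm_neg, ha, hb] at this
        linarith
      have h2 : -(‖a + b‖) ≤ V₁ - V₂ := by
        have := norm_sub_norm_le b (-a)
        simp only [sub_neg_eq_add, norm_neg, ha, hb, add_comm b a] at this
        linarith
      constructor
      · exact sq_le_sq' h2 h1
      · exact pow_le_pow_left₀ (norm_nonneg _) htri 2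
    -- pointwise bounds on γb, γe
    have key_b : ∀ ω, γbar_b * (1 - Δb) ≤ γb ω := by
      intro ω
      have h := (habs Vb₁ Vb₂ (φ 0 ω) (φ 1 ω) hVb₁ hVb₂).1
      have heq : γbar_b * (1 - Δb) = γbar_b * (Vb₁ - Vb₂) ^ 2 / (Vb₁ ^ 2 + Vb₂ ^ 2) := by
        have h1 : (1 : ℝ) - 2 * Vb₁ * Vb₂ / (Vb₁ ^ 2 + Vb₂ ^ 2) =
            (Vb₁ - Vb₂) ^ 2 / (Vb₁ ^ 2 + Vb₂ ^ 2) := by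
          rw [eq_div_iff hSb.ne', sub_mul, one_mul, div_mul_cancel₀ _ hSb.ne']; ring
        rw [hΔb, h1, mul_div_assoc]
      rw [heq, hγb_def ω]
      gcongr
    have key_e : ∀ ω, γe ω ≤ γbar_e * (1 + Δe) := by
      intro ω
      have h := (habs Ve₁ Ve₂ (φ 2 ω) (φ 3 ω) hVe₁ hVe₂).2
      have heq : γbar_e * (1 + Δe) = γbar_e * (Ve₁ + Ve₂) ^ 2 / (Ve₁ ^ 2 + Ve₂ ^ 2) := by
        have h1 : (1 : ℝ) + 2 * Ve₁ * Ve₂ / (Ve₁ ^ 2 + Ve₂ ^ 2) =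
            (Ve₁ + Ve₂) ^ 2 / (Ve₁ ^ 2 + Ve₂ ^ 2) := by
          rw [eq_div_iff hSe.ne', add_mul, one_mul, div_mul_cancel₀ _ hSe.ne']; ring
        rw [hΔe, h1, mul_div_assoc]
      rw [heq, hγe_def ω]
      gcongr
    have hΔb_le : Δb ≤ 1 := by
      rw [hΔb, div_le_one hSb]; nlinarith [sq_nonneg (Vb₁ - Vb₂)]
    have hΔe_nn : 0 ≤ Δe := by rw [hΔe]; positivity
    have hA : 0 ≤ γbar_b * (1 - Δb) := mul_nonneg hγbar_b.le (by linarith)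
    have hB : 0 < γbar_e * (1 + Δe) + 1 := by nlinarith
    set L := Real.logb 2 ((γbar_b * (1 - Δb) + 1) / (γbar_e * (1 + Δe) + 1)) with hL
    have hRsL : Rs < L := by
      rcases lt_max_iff.mp hRsmax with h | h
      · linarith
      · exact h
    have hempty : {ω | max 0 (Real.logb 2 (1 + γb ω) - Real.logb 2 (1 + γe ω)) < Rs} = ∅ := by
      ext ω
      simp only [Set.mem_setOf_eq, Set.mem_empty_iff_false, iff_false, not_lt]
      have hγb_ge := key_b ω
      have hγe_le := key_e ω
      have hγe_nn : 0 ≤ γe ω := by rw [hγe_def ω]; positivity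
      have h1b : 0 < γbar_b * (1 - Δb) + 1 := by linarith
      have hlog1 : Real.logb 2 (γbar_b * (1 - Δb) + 1) ≤ Real.logb 2 (1 + γb ω) :=
        Real.logb_le_logb_of_le one_lt_two h1b (by linarith)
      have hlog2 : Real.logb 2 (1 + γe ω) ≤ Real.logb 2 (γbar_e * (1 + Δe) + 1) :=
        Real.logb_le_logb_of_le one_lt_two (by linarith) (by linarith)
      have hLeq : L = Real.logb 2 (γbar_b * (1 - Δb) + 1) -
          Real.logb 2 (γbar_e * (1 + Δe) + 1) := by
        rw [hL, Real.logb_div (by linarith) (by linarith)]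
      have : Rs ≤ Real.logb 2 (1 + γb ω) - Real.logb 2 (1 + γe ω) := by
        rw [hLeq] at hRsL; linarith
      exact le_max_of_le_right this
    rw [hempty, measure_empty]
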